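/- Let H = (U, φ) be a hypergraph in the binary-relation definition, and define φ* = ¬φ ∩ (1' ∪ ˘φ), where ¬φ is the complement relation, 1' the identity relation, and ˘φ the converse relation. Then (U, φ*) is again a hypergraph in the binary-relation definition: (1) for all x, y ∈ U, (x,y) ∈ φ* implies (y,y) ∈ φ*, and (2) for all x, y, z ∈ U, (x,y) ∈ φ* and (y,z) ∈ φ* imply y = z. -/
import Mathlib

/-- The dual relation φ* = ¬φ ∩ (1' ∪ ˘φ). -/
def dualRel {U : Type*} (φ : U → U → Prop) : U → U → Prop :=
  fun x y => ¬ φ x y ∧ (x = y ∨ φ y x)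

theorem dual_is_murel_hypergraph {U : Type*} (φ : U → U → Prop)
    (h1 : ∀ x y : U, φ x y → φ y y)
    (h2 : ∀ x y z : U, φ x y → φ y z → y = z) :
    (∀ x y : U, dualRel φ x y → dualRel φ y y) ∧
    (∀ x y z : U, dualRel φ x y → dualRel φ y z → y = z) := by
  constructor
  · rintro x y ⟨hn, h | h⟩
    · subst h; exact ⟨hn, Or.inl rfl⟩
    · refine ⟨fun hyy => ?_, Or.inl rfl⟩
      have := h2 y y x hyy h
      exact hn (this ▸ hyy)
  · rintro x y z ⟨hn, hx⟩ ⟨hn', hy | hy⟩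
    · exact hy
    · exact absurd (h1 z y hy) (fun hyy => hx.elim (fun e => hn (e ▸ hyy))
        (fun hyx => hn ((h2 y y x hyy hyx) ▸ hyy)))
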